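/- Let n = q^{g+1} with q ≥ 3 and g ≥ 3 (so n ≥ q^4). There exists a graph on n vertices consisting of a Hamiltonian path g_1 — g_2 — ... — g_n together with n/q hyperedges, each joining q vertices, such that every vertex is incident to exactly one hyperedge, and the shortest cycle in the resulting hypergraph (where a cycle is a closed walk not repeating the same edge/hyperedge in two consecutive steps, and in particular not moving between two vertices of the same hyperedge twice in a row) has length at least g. -/

import Mathlib

/-- Hamiltonian path adjacency on the line `g_0 — g_1 — ⋯ — g_{n-1}`. -/
def HamAdj {n : ℕ} (a b : Fin n) : Prop := a.val + 1 = b.val ∨ b.val + 1 = a.val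

/-- Two distinct vertices joined by a hyperedge of `A`. -/
def HyperAdj {n : ℕ} (A : Finset (Finset (Fin n))) (a b : Fin n) : Prop :=
  a ≠ b ∧ ∃ e ∈ A, a ∈ e ∧ b ∈ e

/-- A cycle of length L in the hypergraph: a closed walk `w` with step types `t`
(`true` = Hamiltonian edge, `false` = hyperedge) which never uses the same edge or
hyperedge in two consecutive steps; since the hyperedges form a matching, two
consecutive hyperedge steps would necessarily use the same hyperedge (a U-turn
or a roundabout), so they are forbidden, and a Hamiltonian U-turn is forbidden. -/
def IsCycleWalk {n : ℕ} (A : Finset (Finset (Fin n))) (L : ℕ)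
    (w : ZMod L → Fin n) (t : ZMod L → Bool) : Prop :=
  0 < L
  ∧ (∀ i : ZMod L, (t i = true → HamAdj (w i) (w (i + 1)))
      ∧ (t i = false → HyperAdj A (w i) (w (i + 1))))
  ∧ (∀ i : ZMod L, ¬(t i = false ∧ t (i + 1) = false))
  ∧ (∀ i : ZMod L, ¬(t i = true ∧ t (i + 1) = true ∧ w (i + 2) = w i))

namespace S12
open Finset

variable {n N q : ℕ}

/-- same-fiber adjacency -/
def hEq (f : Fin n → Fin N) (a b : Fin n) : Prop := a ≠ b ∧ f a = f b

/-- cycle walk phrased via the fiber map -/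
def CW (f : Fin n → Fin N) (L : ℕ) (w : ZMod L → Fin n) (t : ZMod L → Bool) : Prop :=
  0 < L
  ∧ (∀ i : ZMod L, (t i = true → HamAdj (w i) (w (i + 1)))
      ∧ (t i = false → hEq f (w i) (w (i + 1))))
  ∧ (∀ i : ZMod L, ¬(t i = false ∧ t (i + 1) = false))
  ∧ (∀ i : ZMod L, ¬(t i = true ∧ t (i + 1) = true ∧ w (i + 2) = w i))

def Fib (f : Fin n → Fin N) (j : Fin N) : Finset (Fin n) := univ.filter (fun v => f v = j)

def AOf (f : Fin n → Fin N) : Finset (Finset (Fin n)) := univ.image (Fib f)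

def Valid (q : ℕ) (f : Fin n → Fin N) : Prop := ∀ j, (Fib f j).card = q

lemma mem_Fib {f : Fin n → Fin N} {j} {v} : v ∈ Fib f j ↔ f v = j := by
  simp [Fib]

lemma hyperAdj_iff (f : Fin n → Fin N) (a b : Fin n) :
    HyperAdj (AOf f) a b ↔ hEq f a b := by
  constructor
  · rintro ⟨hab, e, he, ha, hb⟩
    simp only [AOf, mem_image] at he
    obtain ⟨j, -, rfl⟩ := he
    exact ⟨hab, (mem_Fib.1 ha).trans (mem_Fib.1 hb).symm⟩
  · rintro ⟨hab, hf⟩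
    exact ⟨hab, Fib f (f a), mem_image_of_mem _ (mem_univ _), mem_Fib.2 rfl, mem_Fib.2 hf.symm⟩

lemma CW_iff (f : Fin n → Fin N) (L w t) :
    IsCycleWalk (AOf f) L w t ↔ CW f L w t := by
  unfold IsCycleWalk CW
  simp only [hyperAdj_iff]

/-- residue fiber map -/
def res (hN : 0 < N) : Fin n → Fin N := fun v => ⟨v.val % N, Nat.mod_lt _ hN⟩

lemma res_valid (hn : n = q * N) (hN : 0 < N) : Valid q (res (n := n) hN) := by
  intro j
  have key : ∀ k : Fin q, j.val + k.val * N < n := by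
    intro k
    have h1 : j.val + k.val * N < (k.val + 1) * N := by
      have := j.isLt; rw [Nat.add_mul, Nat.one_mul]; omega
    have h2 : (k.val + 1) * N ≤ q * N := Nat.mul_le_mul_right _ k.isLt
    omega
  have himg : Fib (res (n := n) hN) j = (univ : Finset (Fin q)).image
      (fun k => (⟨j.val + k.val * N, key k⟩ : Fin n)) := by
    ext v
    simp only [mem_Fib, mem_image, mem_univ, true_and]
    constructor
    · intro hv
      have h1 : v.val % N = j.val := congrArg Fin.val hv
      have hdivlt : v.val / N < q := by
        apply Nat.div_lt_of_lt_mul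
        calc v.val < n := v.isLt
          _ = N * q := by rw [hn, Nat.mul_comm]
      refine ⟨⟨v.val / N, hdivlt⟩, Fin.ext ?_⟩
      simp only
      have h3 := Nat.mod_add_div v.val N
      have h4 : v.val / N * N = N * (v.val / N) := Nat.mul_comm _ _
      omega
    · rintro ⟨k, rfl⟩
      apply Fin.ext
      show (j.val + k.val * N) % N = j.val
      rw [Nat.add_mul_mod_self_right]
      exact Nat.mod_eq_of_lt j.isLt
  rw [himg, card_image_of_injective _ ?_, card_univ, Fintype.card_fin]
  intro a b hab
  have h := congrArg Fin.val hab
  simp only at h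
  exact Fin.ext (Nat.eq_of_mul_eq_mul_right hN (by omega))

/-! ### linear constrained walks -/

structure LW (f : Fin n → Fin N) (ℓ : ℕ) (p : ℕ → Fin n) (s : ℕ → Bool) : Prop where
  step : ∀ j, j < ℓ → (s j = true → HamAdj (p j) (p (j+1))) ∧ (s j = false → hEq f (p j) (p (j+1)))
  nohh : ∀ j, j + 1 < ℓ → ¬(s j = false ∧ s (j+1) = false)
  nout : ∀ j, j + 2 ≤ ℓ → ¬(s j = true ∧ s (j+1) = true ∧ p (j+2) = p j)

lemma LW.tail {f : Fin n → Fin N} {ℓ p s} (h : LW f ℓ p s) :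
    LW f (ℓ-2) (fun j => p (j+1)) (fun j => s (j+1)) := by
  constructor
  · intro j hj; exact h.step (j+1) (by omega)
  · intro j hj; exact h.nohh (j+1) (by omega)
  · intro j hj
    have := h.nout (j+1) (by omega)
    simpa using this

lemma LW.rev {f : Fin n → Fin N} {ℓ p s} (h : LW f ℓ p s) :
    LW f ℓ (fun j => p (ℓ - j)) (fun j => s (ℓ - 1 - j)) := by
  constructor
  · intro j hj
    have h1 : ℓ - (j+1) = ℓ - 1 - j := by omega
    have h2 := h.step (ℓ - 1 - j) (by omega)
    have h3 : (ℓ - 1 - j) + 1 = ℓ - j := by omega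
    rw [h3] at h2
    constructor
    · intro hs
      rcases h2.1 hs with h4 | h4
      · right; rw [h1]; exact h4
      · left; rw [h1]; exact h4
    · intro hs
      obtain ⟨h4, h5⟩ := h2.2 hs
      exact ⟨fun hc => h4 (by rw [h1] at hc; exact hc.symm), by rw [h1]; exact h5.symm⟩
  · intro j hj
    have h2 := h.nohh (ℓ - 2 - j) (by omega)
    have e1 : ℓ - 1 - j = (ℓ - 2 - j) + 1 := by omega
    have e2 : ℓ - 1 - (j+1) = ℓ - 2 - j := by omega
    rw [e1, e2]
    tauto
  · intro j hj
    have h2 := h.nout (ℓ - 2 - j) (by omega)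
    have e1 : ℓ - 1 - j = (ℓ - 2 - j) + 1 := by omega
    have e2 : ℓ - 1 - (j+1) = ℓ - 2 - j := by omega
    have e3 : ℓ - (j + 2) = ℓ - 2 - j := by omega
    have e4 : ℓ - j = (ℓ - 2 - j) + 2 := by omega
    rw [e1, e2, e3, e4]
    rintro ⟨a, b, c⟩
    exact h2 ⟨b, a, c.symm⟩

/-! ### building cyclic witnesses -/

lemma val_succ' {m : ℕ} [NeZero m] (i : ZMod m) : (i+1).val = (i.val + 1) % m := by
  have h1 : (i+1).val = (i.val + (1 : ZMod m).val) % m := ZMod.val_add i 1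
  have h2 : (1 : ZMod m).val = 1 % m := by
    have : ((1 : ℕ) : ZMod m).val = 1 % m := ZMod.val_natCast m 1
    simpa using this
  rw [h1, h2]
  conv_rhs => rw [Nat.add_mod]
  rw [Nat.mod_eq_of_lt (ZMod.val_lt i)]


lemma val_succ2 {m : ℕ} [NeZero m] (i : ZMod m) : (i+2).val = (i.val + 2) % m := by
  have e : i + 2 = (i + 1) + 1 := by ring
  rw [e, val_succ', val_succ', Nat.mod_add_mod]


lemma build_CW (f : Fin n → Fin N) (m : ℕ) (hm : 0 < m) (P : ℕ → Fin n) (S : ℕ → Bool)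
    (hstep : ∀ r, r < m → (S r = true → HamAdj (P r) (P ((r+1) % m)))
      ∧ (S r = false → hEq f (P r) (P ((r+1) % m))))
    (hhh : ∀ r, r < m → ¬(S r = false ∧ S ((r+1) % m) = false))
    (hut : ∀ r, r < m → ¬(S r = true ∧ S ((r+1) % m) = true ∧ P ((r+2) % m) = P r)) :
    ∃ w t, CW f m w t := by
  haveI : NeZero m := ⟨by omega⟩
  refine ⟨fun i => P i.val, fun i => S i.val, hm, ?_, ?_, ?_⟩
  · intro i
    have hv := ZMod.val_lt i
    constructor
    · intro ht
      show HamAdj (P i.val) (P ((i+1 : ZMod m)).val)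
      rw [val_succ']
      exact (hstep i.val hv).1 ht
    · intro ht
      show hEq f (P i.val) (P ((i+1 : ZMod m)).val)
      rw [val_succ']
      exact (hstep i.val hv).2 ht
  · intro i
    have hv := ZMod.val_lt i
    show ¬(S i.val = false ∧ S ((i+1 : ZMod m)).val = false)
    rw [val_succ']
    exact hhh i.val hv
  · intro i
    have hv := ZMod.val_lt i
    show ¬(S i.val = true ∧ S ((i+1 : ZMod m)).val = true ∧ P ((i+2 : ZMod m)).val = P i.val)
    rw [val_succ', val_succ2]
    exact hut i.val hv

/-! ### extraction: a same-fiber-closed constrained path yields a short witness -/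

lemma extract_open {f : Fin n → Fin N} {ℓ p s} (hf : LW f ℓ p s) (h1 : 1 ≤ ℓ)
    (hs0 : s 0 = true) (hsl : s (ℓ-1) = true)
    (hne : p 0 ≠ p ℓ) (hfe : f (p 0) = f (p ℓ)) :
    ∃ w t, CW f (ℓ+1) w t := by
  apply build_CW f (ℓ+1) (by omega) p (fun r => if r = ℓ then false else s r)
  · intro r hr
    by_cases hrl : r = ℓ
    · subst hrl
      rw [if_pos rfl, Nat.mod_self]
      exact ⟨fun h => by simp at h, fun _ => ⟨fun hc => hne hc.symm, hfe.symm⟩⟩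
    · rw [if_neg hrl, Nat.mod_eq_of_lt (by omega : r + 1 < ℓ + 1)]
      exact hf.step r (by omega)
  · intro r hr
    by_cases hrl : r = ℓ
    · rw [hrl, Nat.mod_self, if_neg (by omega : ¬ (0 : ℕ) = ℓ)]
      rintro ⟨-, h0⟩
      rw [hs0] at h0; exact Bool.noConfusion h0
    · rw [Nat.mod_eq_of_lt (by omega : r + 1 < ℓ + 1), if_neg hrl]
      by_cases hrl2 : r + 1 = ℓ
      · rw [if_pos hrl2]
        rintro ⟨h0, -⟩
        have : r = ℓ - 1 := by omega
        rw [this, hsl] at h0; exact Bool.noConfusion h0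
      · rw [if_neg hrl2]
        exact hf.nohh r (by omega)
  · intro r hr
    by_cases hrl : r = ℓ
    · rw [hrl, if_pos rfl]
      rintro ⟨h0, -⟩; exact Bool.noConfusion h0
    · rw [Nat.mod_eq_of_lt (by omega : r + 1 < ℓ + 1), if_neg hrl]
      by_cases hrl2 : r + 1 = ℓ
      · rw [if_pos hrl2]
        rintro ⟨-, h0, -⟩; exact Bool.noConfusion h0
      · rw [if_neg hrl2, Nat.mod_eq_of_lt (by omega : r + 2 < ℓ + 1)]
        exact hf.nout r (by omega)

lemma mixed_case {f : Fin n → Fin N} {ℓ : ℕ} {p : ℕ → Fin n} {s : ℕ → Bool}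
    (hf : LW f ℓ p s) (hℓ3 : 3 ≤ ℓ) (hvv : p 1 = p (ℓ-1))
    (hmix : (s 1 = true ∧ s (ℓ-2) = false) ∨ (s 1 = false ∧ s (ℓ-2) = true)) :
    ∃ m, 1 ≤ m ∧ m ≤ ℓ-2 ∧ ∃ w t, CW f m w t := by
  have hsne : s 1 ≠ s (ℓ-2) := by
    rcases hmix with ⟨a, b⟩ | ⟨a, b⟩ <;> rw [a, b] <;> simp
  have hℓ4 : 4 ≤ ℓ := by
    by_contra hc
    have he : ℓ = 3 := by omega
    rw [he] at hsne
    exact hsne rfl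
  refine ⟨ℓ-2, by omega, le_refl _, ?_⟩
  apply build_CW f (ℓ-2) (by omega) (fun j => p (j+1)) (fun j => s (j+1))
  · intro r hr
    by_cases hrl : r = ℓ-3
    · subst hrl
      rw [(by omega : ℓ - 3 + 1 = ℓ - 2), Nat.mod_self, Nat.zero_add]
      have := hf.step (ℓ-2) (by omega)
      rw [(by omega : ℓ - 2 + 1 = ℓ - 1), ← hvv] at this
      exact this
    · rw [Nat.mod_eq_of_lt (by omega : r + 1 < ℓ - 2)]
      have := hf.step (r+1) (by omega)
      rw [(by omega : r + 1 + 1 = r + 2)] at this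
      rw [(by omega : r + 1 + 1 = r + 2)]
      exact this
  · intro r hr
    by_cases hrl : r = ℓ-3
    · subst hrl
      rw [(by omega : ℓ - 3 + 1 = ℓ - 2), Nat.mod_self, Nat.zero_add]
      rintro ⟨a, b⟩
      rcases hmix with ⟨c, d⟩ | ⟨c, d⟩
      · rw [c] at b; exact Bool.noConfusion b
      · rw [d] at a; exact Bool.noConfusion a
    · rw [Nat.mod_eq_of_lt (by omega : r + 1 < ℓ - 2)]
      have := hf.nohh (r+1) (by omega)
      rw [(by omega : r + 1 + 1 = r + 2)] at this
      rw [(by omega : r + 1 + 1 = r + 2)]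
      exact this
  · intro r hr
    by_cases hrl : r = ℓ-3
    · subst hrl
      rw [(by omega : ℓ - 3 + 1 = ℓ - 2), Nat.mod_self, Nat.zero_add]
      rintro ⟨a, b, -⟩
      rcases hmix with ⟨c, d⟩ | ⟨c, d⟩
      · rw [d] at a; exact Bool.noConfusion a
      · rw [c] at b; exact Bool.noConfusion b
    · by_cases hrl2 : r = ℓ-4
      · rintro ⟨a, b, c⟩
        rw [hrl2] at a b c
        rw [Nat.mod_eq_of_lt (by omega : ℓ - 4 + 1 < ℓ - 2)] at b
        rw [(by omega : ℓ - 4 + 1 = ℓ - 3)] at a b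
        rw [(by omega : ℓ - 4 + 2 = ℓ - 2), Nat.mod_self, Nat.zero_add,
          (by omega : ℓ - 4 + 1 = ℓ - 3)] at c
        exact hf.nout (ℓ-3) (by omega)
          ⟨a, b, by rw [(by omega : ℓ - 3 + 2 = ℓ - 1), ← hvv]; exact c⟩
      · rintro ⟨a, b, c⟩
        rw [Nat.mod_eq_of_lt (by omega : r + 1 < ℓ - 2)] at b
        rw [Nat.mod_eq_of_lt (by omega : r + 2 < ℓ - 2)] at c
        refine hf.nout (r+1) (by omega) ⟨a, b, ?_⟩
        rw [(by omega : r + 1 + 2 = r + 2 + 1)]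
        exact c

lemma extract_closed {f : Fin n → Fin N} : ∀ ℓ p s, LW f ℓ p s → 1 ≤ ℓ →
    s 0 = true → s (ℓ-1) = true → p 0 = p ℓ →
    ∃ m, 1 ≤ m ∧ m ≤ ℓ ∧ ∃ w t, CW f m w t := by
  intro ℓ
  induction ℓ using Nat.strong_induction_on with
  | _ ℓ IH =>
  intro p s hf h1 hs0 hsl hcl
  rcases Nat.lt_or_ge ℓ 3 with hℓ3 | hℓ3
  · exfalso
    interval_cases ℓ
    · have hstep := (hf.step 0 (by omega)).1 hs0
      rw [← hcl] at hstep
      rcases hstep with h | h <;> omega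
    · exact hf.nout 0 (by omega) ⟨hs0, by simpa using hsl, hcl.symm⟩
  · by_cases hvv : p 1 = p (ℓ-1)
    · -- strip case
      have hts : LW f (ℓ-2) (fun j => p (j+1)) (fun j => s (j+1)) := hf.tail
      have hs1 : s (ℓ-2) = true ∨ s (ℓ-2) = false := by cases s (ℓ-2) <;> simp
      have hs2 : s 1 = true ∨ s 1 = false := by cases s 1 <;> simp
      rcases hs2 with hb1 | hb1 <;> rcases hs1 with hb2 | hb2
      · -- both true : recurse
        obtain ⟨m, hm1, hm2, hw⟩ := IH (ℓ-2) (by omega) _ _ hts (by omega)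
          (by exact hb1)
          (by rw [(by omega : ℓ - 2 - 1 + 1 = ℓ - 2)]; exact hb2)
          (by rw [(by omega : ℓ - 2 + 1 = ℓ - 1)]; exact hvv)
        exact ⟨m, hm1, by omega, hw⟩
      · -- s 1 = true, s (ℓ-2) = false : mixed
        rcases mixed_case hf hℓ3 hvv (Or.inl ⟨hb1, hb2⟩) with ⟨m, hm1, hm2, hw⟩
        exact ⟨m, hm1, by omega, hw⟩
      · -- s 1 = false, s (ℓ-2) = true : mixed
        rcases mixed_case hf hℓ3 hvv (Or.inr ⟨hb1, hb2⟩) with ⟨m, hm1, hm2, hw⟩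
        exact ⟨m, hm1, by omega, hw⟩
      · -- both false
        rcases Nat.lt_or_ge ℓ 5 with hℓ5 | hℓ5
        · exfalso
          interval_cases ℓ
          · -- ℓ = 3 : step 1 is a hyperedge from p 1 to p 2 = p 1
            have := (hf.step 1 (by omega)).2 hb1
            exact this.1 (by rw [hvv])
          · -- ℓ = 4 : steps 1 and 2 both hyper, adjacent
            exact hf.nohh 1 (by omega) ⟨hb1, hb2⟩
        · -- ℓ ≥ 5
          have hs2t : s 2 = true := by
            by_contra hc
            exact hf.nohh 1 (by omega) ⟨hb1, by simpa using hc⟩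
          have hs3t : s (ℓ-3) = true := by
            by_contra hc
            refine hf.nohh (ℓ-3) (by omega) ⟨by simpa using hc, ?_⟩
            rw [(by omega : ℓ - 3 + 1 = ℓ - 2)]; exact hb2
          have hfx : f (p 2) = f (p (ℓ-2)) := by
            have e1 := (hf.step 1 (by omega)).2 hb1
            have e2 := (hf.step (ℓ-2) (by omega)).2 hb2
            rw [(by omega : ℓ - 2 + 1 = ℓ - 1), ← hvv] at e2
            exact e1.2.symm.trans e2.2.symm
          by_cases hxx : p 2 = p (ℓ-2)
          · -- strip twice and recurse
            have hts2 : LW f (ℓ-4) (fun j => p (j+2)) (fun j => s (j+2)) := by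
              have := hts.tail
              have e : ℓ - 2 - 2 = ℓ - 4 := by omega
              rw [e] at this
              convert this using 2 <;> omega
            obtain ⟨m, hm1, hm2, hw⟩ := IH (ℓ-4) (by omega) _ _ hts2 (by omega)
              (by exact hs2t)
              (by rw [(by omega : ℓ - 4 - 1 + 2 = ℓ - 3)]; exact hs3t)
              (by rw [(by omega : ℓ - 4 + 2 = ℓ - 2)]; exact hxx)
            exact ⟨m, hm1, by omega, hw⟩
          · -- merged witness of length ℓ-3
            refine ⟨ℓ-3, by omega, by omega, ?_⟩
            apply build_CW f (ℓ-3) (by omega) (fun j => p (j+2))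
              (fun r => if r = ℓ-4 then false else s (r+2))
            · intro r hr
              by_cases hrl : r = ℓ-4
              · subst hrl
                rw [if_pos rfl, (by omega : ℓ - 4 + 1 = ℓ - 3), Nat.mod_self]
                exact ⟨fun h => by simp at h,
                  fun _ => ⟨fun hc => hxx (by rw [(by omega : ℓ-4+2 = ℓ-2)] at hc; exact hc.symm),
                    by rw [(by omega : ℓ-4+2 = ℓ-2)]; exact hfx.symm⟩⟩
              · rw [if_neg hrl, Nat.mod_eq_of_lt (by omega : r + 1 < ℓ - 3)]
                have := hf.step (r+2) (by omega)
                rw [(by omega : r + 2 + 1 = r + 1 + 2)] at this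
                exact this
            · intro r hr
              by_cases hrl : r = ℓ-4
              · subst hrl
                rw [(by omega : ℓ - 4 + 1 = ℓ - 3), Nat.mod_self,
                  if_neg (by omega : ¬ (0:ℕ) = ℓ-4)]
                rintro ⟨-, h0⟩
                rw [hs2t] at h0; exact Bool.noConfusion h0
              · rw [Nat.mod_eq_of_lt (by omega : r + 1 < ℓ - 3), if_neg hrl]
                by_cases hrl2 : r + 1 = ℓ-4
                · rw [if_pos hrl2]
                  rintro ⟨h0, -⟩
                  have : r + 2 = ℓ - 3 := by omega
                  rw [this, hs3t] at h0; exact Bool.noConfusion h0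
                · rw [if_neg hrl2]
                  have := hf.nohh (r+2) (by omega)
                  rw [(by omega : r + 2 + 1 = r + 1 + 2)] at this
                  exact this
            · intro r hr
              by_cases hrl : r = ℓ-4
              · subst hrl
                rw [if_pos rfl]
                rintro ⟨h0, -⟩; exact Bool.noConfusion h0
              · rw [Nat.mod_eq_of_lt (by omega : r + 1 < ℓ - 3), if_neg hrl]
                by_cases hrl2 : r + 1 = ℓ-4
                · rw [if_pos hrl2]
                  rintro ⟨-, h0, -⟩; exact Bool.noConfusion h0
                · rw [if_neg hrl2, Nat.mod_eq_of_lt (by omega : r + 2 < ℓ - 3)]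
                  have := hf.nout (r+2) (by omega)
                  rw [(by omega : r + 2 + 1 = r + 1 + 2), (by omega : r + 2 + 2 = r + 2 + 2)] at this
                  have e : r + 2 + 2 = r + 2 + 2 := rfl
                  convert this using 3 <;> omega
    · -- p 1 ≠ p (ℓ-1) : direct cyclic witness of length ℓ
      refine ⟨ℓ, by omega, le_refl _, ?_⟩
      apply build_CW f ℓ (by omega) p s
      · intro r hr
        by_cases hrl : r = ℓ-1
        · subst hrl
          rw [(by omega : ℓ - 1 + 1 = ℓ), Nat.mod_self]
          have := hf.step (ℓ-1) (by omega)
          rw [(by omega : ℓ - 1 + 1 = ℓ), ← hcl] at this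
          exact this
        · rw [Nat.mod_eq_of_lt (by omega : r + 1 < ℓ)]
          exact hf.step r (by omega)
      · intro r hr
        by_cases hrl : r = ℓ-1
        · subst hrl
          rw [(by omega : ℓ - 1 + 1 = ℓ), Nat.mod_self]
          rintro ⟨h0, -⟩
          rw [hsl] at h0; exact Bool.noConfusion h0
        · rw [Nat.mod_eq_of_lt (by omega : r + 1 < ℓ)]
          exact hf.nohh r (by omega)
      · intro r hr
        by_cases hrl : r = ℓ-1
        · subst hrl
          rw [(by omega : ℓ - 1 + 1 = ℓ), Nat.mod_self,
            (by omega : ℓ - 1 + 2 = ℓ + 1), Nat.add_mod_left,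
            Nat.mod_eq_of_lt (by omega : 1 < ℓ)]
          rintro ⟨-, -, h0⟩
          exact hvv h0
        · by_cases hrl2 : r = ℓ-2
          · subst hrl2
            rw [Nat.mod_eq_of_lt (by omega : ℓ - 2 + 1 < ℓ),
              (by omega : ℓ - 2 + 2 = ℓ), Nat.mod_self]
            have := hf.nout (ℓ-2) (by omega)
            rw [(by omega : ℓ - 2 + 2 = ℓ), ← hcl] at this
            exact this
          · rw [Nat.mod_eq_of_lt (by omega : r + 1 < ℓ),
              Nat.mod_eq_of_lt (by omega : r + 2 < ℓ)]
            exact hf.nout r (by omega)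

/-! ### reachability ball and its size -/

def upS (v : Fin n) : Finset (Fin n × Option Bool) :=
  (univ.filter (fun u : Fin n => v.val + 1 = u.val)).image (fun u => (u, some true))

def downS (v : Fin n) : Finset (Fin n × Option Bool) :=
  (univ.filter (fun u : Fin n => u.val + 1 = v.val)).image (fun u => (u, some false))

def hypS (f : Fin n → Fin N) (v : Fin n) : Finset (Fin n × Option Bool) :=
  ((Fib f (f v)).erase v).image (fun u => (u, none))

def nexts (f : Fin n → Fin N) : Fin n × Option Bool → Finset (Fin n × Option Bool)
  | (v, none) => upS v ∪ downS v
  | (v, some true) => upS v ∪ hypS f v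
  | (v, some false) => downS v ∪ hypS f v

def reach (f : Fin n → Fin N) (Y : Finset (Fin n)) : ℕ → Finset (Fin n × Option Bool)
  | 0 => Y.biUnion (fun v => upS v ∪ downS v ∪ hypS f v)
  | (c+1) => (reach f Y c).biUnion (nexts f)

def Reach (f : Fin n → Fin N) (Y : Finset (Fin n)) (r : ℕ) : Finset (Fin n) :=
  Y ∪ (Finset.range r).biUnion (fun c => (reach f Y c).image Prod.fst)

lemma Y_subset_Reach (f : Fin n → Fin N) (Y r) : Y ⊆ Reach f Y r := by
  intro v hv; exact mem_union_left _ hv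

/-- state after step j of a linear walk -/
def stOf (p : ℕ → Fin n) (s : ℕ → Bool) (j : ℕ) : Option Bool :=
  if s j = true then some (decide ((p j).val + 1 = (p (j+1)).val)) else none

lemma mem_upS {v u : Fin n} (h : v.val + 1 = u.val) :
    ((u, some true) : Fin n × Option Bool) ∈ upS v :=
  mem_image_of_mem _ (mem_filter.2 ⟨mem_univ _, h⟩)

lemma mem_downS {v u : Fin n} (h : u.val + 1 = v.val) :
    ((u, some false) : Fin n × Option Bool) ∈ downS v :=
  mem_image_of_mem _ (mem_filter.2 ⟨mem_univ _, h⟩)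

lemma mem_hypS {f : Fin n → Fin N} {v u : Fin n} (hne : u ≠ v) (hfe : f u = f v) :
    ((u, none) : Fin n × Option Bool) ∈ hypS f v :=
  mem_image_of_mem _ (mem_erase.2 ⟨hne, mem_Fib.2 hfe⟩)

lemma reach_mem {f : Fin n → Fin N} {Y : Finset (Fin n)} {ℓ p s} (hf : LW f ℓ p s)
    (hY : p 0 ∈ Y) : ∀ j, j < ℓ → (p (j+1), stOf p s j) ∈ reach f Y j := by
  intro j
  induction j with
  | zero =>
    intro hj
    show _ ∈ Y.biUnion _
    rw [mem_biUnion]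
    refine ⟨p 0, hY, ?_⟩
    cases hs : s 0 with
    | true =>
      rcases (hf.step 0 hj).1 hs with hup | hdn
      · have hd : decide ((p 0).val + 1 = (p (0+1)).val) = true := decide_eq_true hup
        have : stOf p s 0 = some true := by rw [stOf, if_pos hs, hd]
        rw [this]
        exact mem_union_left _ (mem_union_left _ (mem_upS hup))
      · have hd : decide ((p 0).val + 1 = (p (0+1)).val) = false :=
          decide_eq_false (by omega)
        have : stOf p s 0 = some false := by rw [stOf, if_pos hs, hd]
        rw [this]
        exact mem_union_left _ (mem_union_right _ (mem_downS hdn))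
    | false =>
      obtain ⟨hne, hfe⟩ := (hf.step 0 hj).2 hs
      have : stOf p s 0 = none := by rw [stOf, if_neg (by rw [hs]; simp)]
      rw [this]
      exact mem_union_right _ (mem_hypS (fun hc => hne hc.symm) hfe.symm)
  | succ j IHj =>
    intro hj
    have hprev := IHj (by omega)
    show _ ∈ (reach f Y j).biUnion (nexts f)
    rw [mem_biUnion]
    refine ⟨(p (j+1), stOf p s j), hprev, ?_⟩
    cases hsj1 : s (j+1) with
    | false =>
      -- hyperedge step; previous step must be a ham step
      have hsj : s j = true := by
        by_contra hc
        exact hf.nohh j (by omega) ⟨by simpa using hc, hsj1⟩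
      obtain ⟨hne, hfe⟩ := (hf.step (j+1) hj).2 hsj1
      have hst1 : stOf p s (j+1) = none := by rw [stOf, if_neg (by rw [hsj1]; simp)]
      have hst0 : stOf p s j = some (decide ((p j).val + 1 = (p (j+1)).val)) := by
        rw [stOf, if_pos hsj]
      rw [hst1, hst0]
      have hm : ((p (j+1+1), none) : Fin n × Option Bool) ∈ hypS f (p (j+1)) :=
        mem_hypS (fun hc => hne hc.symm) hfe.symm
      cases hd : decide ((p j).val + 1 = (p (j+1)).val) with
      | true => exact mem_union_right _ hm
      | false => exact mem_union_right _ hm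
    | true =>
      have hadj := (hf.step (j+1) hj).1 hsj1
      cases hsj : s j with
      | false =>
        have hst0 : stOf p s j = none := by rw [stOf, if_neg (by rw [hsj]; simp)]
        rw [hst0]
        rcases hadj with hup | hdn
        · have hd : decide ((p (j+1)).val + 1 = (p (j+1+1)).val) = true := decide_eq_true hup
          have : stOf p s (j+1) = some true := by rw [stOf, if_pos hsj1, hd]
          rw [this]
          exact mem_union_left _ (mem_upS hup)
        · have hd : decide ((p (j+1)).val + 1 = (p (j+1+1)).val) = false :=
            decide_eq_false (by omega)
          have : stOf p s (j+1) = some false := by rw [stOf, if_pos hsj1, hd]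
          rw [this]
          exact mem_union_right _ (mem_downS hdn)
      | true =>
        have hadjj := (hf.step j (by omega)).1 hsj
        have hst0 : stOf p s j = some (decide ((p j).val + 1 = (p (j+1)).val)) := by
          rw [stOf, if_pos hsj]
        rcases hadj with hup | hdn
        · -- step j+1 goes up; step j must also go up
          have hup2 : (p (j+1)).val + 1 = (p (j+2)).val := hup
          have hb : ((p j).val + 1 = (p (j+1)).val) := by
            rcases hadjj with h | h
            · exact h
            · exfalso
              apply hf.nout j (by omega)
              refine ⟨hsj, hsj1, Fin.ext ?_⟩
              omega
          have hd0 : decide ((p j).val + 1 = (p (j+1)).val) = true := decide_eq_true hb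
          have hd1 : decide ((p (j+1)).val + 1 = (p (j+1+1)).val) = true := decide_eq_true hup
          have h1 : stOf p s (j+1) = some true := by rw [stOf, if_pos hsj1, hd1]
          rw [h1, hst0, hd0]
          exact mem_union_left _ (mem_upS hup)
        · -- step j+1 goes down; step j must also go down
          have hdn2 : (p (j+2)).val + 1 = (p (j+1)).val := hdn
          have hb : ((p (j+1)).val + 1 = (p j).val) := by
            rcases hadjj with h | h
            · exfalso
              apply hf.nout j (by omega)
              refine ⟨hsj, hsj1, Fin.ext ?_⟩
              omega
            · exact h
          have hd0 : decide ((p j).val + 1 = (p (j+1)).val) = false :=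
            decide_eq_false (by omega)
          have hd1 : decide ((p (j+1)).val + 1 = (p (j+1+1)).val) = false :=
            decide_eq_false (by omega)
          have h1 : stOf p s (j+1) = some false := by rw [stOf, if_pos hsj1, hd1]
          rw [h1, hst0, hd0]
          exact mem_union_left _ (mem_downS hdn)

lemma endpoint_mem_Reach {f : Fin n → Fin N} {Y : Finset (Fin n)} {ℓ p s} (hf : LW f ℓ p s)
    (hY : p 0 ∈ Y) (h1 : 1 ≤ ℓ) (r : ℕ) (hr : ℓ ≤ r) : p ℓ ∈ Reach f Y r := by
  have := reach_mem hf hY (ℓ-1) (by omega)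
  have e : ℓ - 1 + 1 = ℓ := by omega
  rw [e] at this
  apply mem_union_right
  rw [mem_biUnion]
  exact ⟨ℓ-1, by simp [mem_range]; omega, mem_image_of_mem _ this⟩

lemma card_upS_le (v : Fin n) : (upS v).card ≤ 1 := by
  refine le_trans card_image_le ?_
  apply card_le_one.2
  intro a ha b hb
  rw [mem_filter] at ha hb
  exact Fin.ext (by omega)

lemma card_downS_le (v : Fin n) : (downS v).card ≤ 1 := by
  refine le_trans card_image_le ?_
  apply card_le_one.2
  intro a ha b hb
  rw [mem_filter] at ha hb
  exact Fin.ext (by omega)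

lemma card_hypS_le {f : Fin n → Fin N} (hv : Valid q f) (v : Fin n) :
    (hypS f v).card ≤ q - 1 := by
  refine le_trans card_image_le ?_
  rw [card_erase_of_mem (mem_Fib.2 rfl), hv]

lemma card_nexts_le {f : Fin n → Fin N} (hv : Valid q f) (hq : 2 ≤ q) :
    ∀ st, (nexts f st).card ≤ q := by
  rintro ⟨v, st⟩
  match st with
  | none =>
    refine le_trans (card_union_le _ _) ?_
    have := card_upS_le v
    have := card_downS_le v
    omega
  | some true =>
    refine le_trans (card_union_le _ _) ?_
    have := card_upS_le v
    have := card_hypS_le hv v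
    omega
  | some false =>
    refine le_trans (card_union_le _ _) ?_
    have := card_downS_le v
    have := card_hypS_le hv v
    omega

lemma card_reach (f : Fin n → Fin N) (hv : Valid q f) (hq : 2 ≤ q)
    (Y : Finset (Fin n)) (hY : Y.card ≤ q) :
    ∀ c, (reach f Y c).card ≤ (q+1) * q^(c+1) := by
  intro c
  induction c with
  | zero =>
    show (Y.biUnion _).card ≤ _
    refine le_trans (card_biUnion_le_card_mul _ _ (q+1) ?_) ?_
    · intro v _
      refine le_trans (card_union_le _ _) ?_
      refine le_trans (Nat.add_le_add (card_union_le _ _) le_rfl) ?_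
      have h1 := card_upS_le v
      have h2 := card_downS_le v
      have h3 := card_hypS_le hv v
      omega
    · rw [pow_one]
      calc Y.card * (q+1) ≤ q * (q+1) := Nat.mul_le_mul_right _ hY
        _ = (q+1) * q := Nat.mul_comm _ _
  | succ c IH =>
    show ((reach f Y c).biUnion _).card ≤ _
    refine le_trans (card_biUnion_le_card_mul _ _ q (fun st _ => card_nexts_le hv hq st)) ?_
    calc (reach f Y c).card * q ≤ ((q+1) * q^(c+1)) * q := Nat.mul_le_mul_right _ IH
      _ = (q+1) * q^(c+2) := by rw [Nat.mul_assoc, ← pow_succ]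

lemma card_Bad (f : Fin n → Fin N) (hv : Valid q f) (hq : 3 ≤ q)
    (Y : Finset (Fin n)) (hY : Y.card ≤ q) {g : ℕ} (hg : 3 ≤ g) (hn : n = q^(g+1)) :
    ((Reach f Y (g-2)).biUnion (fun v => Fib f (f v))).card < n := by
  have hgeom : ∀ r, (q-1) * (∑ c ∈ Finset.range r, q^(c+1)) = q^(r+1) - q := by
    intro r
    induction r with
    | zero => simp
    | succ r IH =>
      rw [Finset.sum_range_succ, Nat.mul_add, IH, (by omega : r+1+1 = r+2)]
      have h3 : q ≤ q^(r+1) := Nat.le_self_pow (by omega) q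
      have h4 : (q-1) * q^(r+1) = q * q^(r+1) - q^(r+1) := by
        rw [Nat.sub_mul, one_mul]
      have h5 : q * q^(r+1) = q^(r+2) := (pow_succ' q (r+1)).symm
      have h6 : q^(r+1) ≤ q^(r+2) := Nat.pow_le_pow_right (by omega) (by omega)
      omega
  have hR : (Reach f Y (g-2)).card ≤ q + 2 * q^(g-1) := by
    unfold Reach
    refine le_trans (card_union_le _ _) ?_
    have h1 : ((Finset.range (g-2)).biUnion (fun c => (reach f Y c).image Prod.fst)).card
        ≤ ∑ c ∈ Finset.range (g-2), (q+1) * q^(c+1) := by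
      refine le_trans card_biUnion_le ?_
      apply Finset.sum_le_sum
      intro c _
      exact le_trans card_image_le (card_reach f hv (by omega) Y hY c)
    have h2 : ∑ c ∈ Finset.range (g-2), (q+1) * q^(c+1) ≤ 2 * q^(g-1) := by
      rw [← Finset.mul_sum]
      have e1 : (q+1) * (∑ c ∈ Finset.range (g-2), q^(c+1))
          ≤ (2*(q-1)) * (∑ c ∈ Finset.range (g-2), q^(c+1)) :=
        Nat.mul_le_mul_right _ (by omega)
      have e2 : (2*(q-1)) * (∑ c ∈ Finset.range (g-2), q^(c+1))
          = 2 * ((q-1) * (∑ c ∈ Finset.range (g-2), q^(c+1))) := by ring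
      rw [e2, hgeom (g-2)] at e1
      have e3 : (g - 2) + 1 = g - 1 := by omega
      rw [e3] at e1
      have e4 : 2 * (q^(g-1) - q) ≤ 2 * q^(g-1) := Nat.mul_le_mul_left _ (Nat.sub_le _ _)
      omega
    omega
  have hBad : ((Reach f Y (g-2)).biUnion (fun v => Fib f (f v))).card
      ≤ (Reach f Y (g-2)).card * q :=
    card_biUnion_le_card_mul _ _ q (fun v _ => le_of_eq (hv (f v)))
  have hfin : (q + 2 * q^(g-1)) * q < q^(g+1) := by
    have e1 : q^(g-1) * q = q^g := by
      rw [← pow_succ]; congr 1; omega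
    have e2 : q^g * q = q^(g+1) := by rw [← pow_succ]
    have e3 : q * q ≤ q ^ (g-1) := by
      calc q * q = q^2 := (sq q).symm
        _ ≤ q^(g-1) := Nat.pow_le_pow_right (by omega) (by omega)
    have e4 : 0 < q^(g-1) := Nat.pow_pos (by omega)
    calc (q + 2 * q^(g-1)) * q = q * q + 2 * (q^(g-1) * q) := by ring
      _ = q * q + 2 * q^g := by rw [e1]
      _ < q^(g-1) * q + 2 * q^g := by
          have : q * q < q^(g-1) * q := by
            apply Nat.mul_lt_mul_of_lt_of_le ?_ le_rfl (by omega)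
            calc q < q * q := by nlinarith
              _ ≤ q^(g-1) := e3
          omega
      _ = q^g + 2 * q^g := by rw [e1]
      _ = 3 * q^g := by ring
      _ ≤ q * q^g := Nat.mul_le_mul_right _ hq
      _ = q^(g+1) := by rw [← pow_succ']
  calc ((Reach f Y (g-2)).biUnion (fun v => Fib f (f v))).card
      ≤ (Reach f Y (g-2)).card * q := hBad
    _ ≤ (q + 2 * q^(g-1)) * q := Nat.mul_le_mul_right _ hR
    _ < q^(g+1) := hfin
    _ = n := hn.symm

/-! ### the key lemma: after a distant swap, no short cycle walk uses a modified pair -/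

lemma no_new {g : ℕ} (f : Fin n → Fin N) (y z : Fin n)
    (hfyz : f y ≠ f z)
    (hzR : ∀ v ∈ Reach f (Fib f (f y)) (g-2), f v ≠ f z)
    (γ₀ : ℕ) (hγ1 : 1 ≤ γ₀) (hγg : γ₀ ≤ g - 1)
    (hmin : ∀ m, 1 ≤ m → m ≤ g - 1 → ∀ (w : ZMod m → Fin n) t, CW f m w t → γ₀ ≤ m)
    (L' : ℕ) (hL1 : 1 ≤ L') (hLγ : L' ≤ γ₀)
    (w : ZMod L' → Fin n) (t : ZMod L' → Bool)
    (hw : CW (fun v => f (Equiv.swap y z v)) L' w t) :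
    ∀ i, t i = false → w i ≠ y ∧ w i ≠ z ∧ w (i+1) ≠ y ∧ w (i+1) ≠ z := by
  obtain ⟨hL0, hstep, hhh, hut⟩ := hw
  haveI : NeZero L' := ⟨by omega⟩
  have hf'y : f (Equiv.swap y z y) = f z := by rw [Equiv.swap_apply_left]
  have hf'z : f (Equiv.swap y z z) = f y := by rw [Equiv.swap_apply_right]
  have hf'o : ∀ v : Fin n, v ≠ y → v ≠ z → f (Equiv.swap y z v) = f v := by
    intro v h1 h2; rw [Equiv.swap_apply_of_ne_of_ne h1 h2]
  set spec : ZMod L' → Prop := fun i => t i = false ∧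
    (w i = y ∨ w i = z ∨ w (i+1) = y ∨ w (i+1) = z) with hspecdef
  -- classification of the two endpoints of a special step
  have pair_sides : ∀ i, spec i →
      (f (w i) = f y ∧ f (w (i+1)) = f z) ∨ (f (w i) = f z ∧ f (w (i+1)) = f y) := by
    intro i hi
    obtain ⟨hti, htouch⟩ := hi
    obtain ⟨hne, hfe0⟩ := (hstep i).2 hti
    have hfe : f (Equiv.swap y z (w i)) = f (Equiv.swap y z (w (i+1))) := hfe0
    by_cases h1 : w i = y
    · left
      have h2 : w (i+1) ≠ y := fun hc => hne (h1.trans hc.symm)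
      have h3 : w (i+1) ≠ z := by
        intro hc
        rw [h1, hc, hf'y, hf'z] at hfe
        exact hfyz hfe.symm
      refine ⟨by rw [h1], ?_⟩
      rw [← hf'o _ h2 h3, ← hfe, h1, hf'y]
    · by_cases h2 : w i = z
      · right
        have h3 : w (i+1) ≠ z := fun hc => hne (h2.trans hc.symm)
        have h4 : w (i+1) ≠ y := by
          intro hc
          rw [h2, hc, hf'y, hf'z] at hfe
          exact hfyz hfe
        refine ⟨by rw [h2], ?_⟩
        rw [← hf'o _ h4 h3, ← hfe, h2, hf'z]
      · rcases htouch with h3 | h3 | h3 | h3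
        · exact absurd h3 h1
        · exact absurd h3 h2
        · right
          refine ⟨?_, by rw [h3]⟩
          rw [← hf'o _ h1 h2, hfe, h3, hf'y]
        · left
          refine ⟨?_, by rw [h3]⟩
          rw [← hf'o _ h1 h2, hfe, h3, hf'z]
  -- the central gap estimate
  have key : ∀ (i₀ : ZMod L') (m : ℕ), spec i₀ → 2 ≤ m → m ≤ L' →
      spec (i₀ + (m : ZMod L')) →
      (∀ r, 1 ≤ r → r < m → ¬ spec (i₀ + (r : ZMod L'))) →
      (γ₀ ≤ m ∧ f (w (i₀ + 1)) = f (w (i₀ + (m : ZMod L')))) := by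
    intro i₀ m hi₀ hm2 hmL him hmin'
    obtain ⟨k, rfl⟩ : ∃ k, m = k + 2 := ⟨m - 2, by omega⟩
    have hcast : ∀ j : ℕ, i₀ + 1 + ((j : ℕ) : ZMod L') + 1 = i₀ + 1 + (((j+1 : ℕ)) : ZMod L') := by
      intro j; push_cast; ring
    have hcast2 : ∀ j : ℕ, i₀ + 1 + ((j : ℕ) : ZMod L') = i₀ + (((j+1 : ℕ)) : ZMod L') := by
      intro j; push_cast; ring
    have hlw : LW f (k+1) (fun j => w (i₀ + 1 + (j : ZMod L')))
        (fun j => t (i₀ + 1 + (j : ZMod L'))) := by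
      constructor
      · intro j hj
        constructor
        · intro hsj
          have h := (hstep (i₀ + 1 + (j : ZMod L'))).1 hsj
          rw [hcast j] at h
          exact h
        · intro hsj
          have hns : ¬ spec (i₀ + ((j+1 : ℕ) : ZMod L')) := hmin' (j+1) (by omega) (by omega)
          have h := (hstep (i₀ + 1 + (j : ZMod L'))).2 hsj
          rw [hcast j] at h
          obtain ⟨hne, hfe0⟩ := h
          have hfe : f (Equiv.swap y z (w (i₀ + 1 + (j : ZMod L'))))
              = f (Equiv.swap y z (w (i₀ + 1 + (((j+1:ℕ)) : ZMod L')))) := hfe0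
          have htf : t (i₀ + ((j+1:ℕ) : ZMod L')) = false := by rw [← hcast2 j]; exact hsj
          have hnt : ¬ (w (i₀ + ((j+1:ℕ) : ZMod L')) = y ∨ w (i₀ + ((j+1:ℕ):ZMod L')) = z
              ∨ w (i₀ + ((j+1:ℕ):ZMod L') + 1) = y ∨ w (i₀ + ((j+1:ℕ):ZMod L') + 1) = z) :=
            fun hd => hns ⟨htf, hd⟩
          push_neg at hnt
          obtain ⟨n1, n2, n3, n4⟩ := hnt
          rw [← hcast2 j] at n1 n2 n3 n4
          rw [hcast j] at n3 n4
          refine ⟨hne, ?_⟩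
          rw [← hf'o _ n1 n2, ← hf'o _ n3 n4]
          exact hfe
      · intro j hj
        have h := hhh (i₀ + 1 + (j : ZMod L'))
        rw [hcast j] at h
        exact h
      · intro j hj
        rintro ⟨a, b, c⟩
        apply hut (i₀ + 1 + (j : ZMod L'))
        refine ⟨a, ?_, ?_⟩
        · rw [hcast j]; exact b
        · have e2 : i₀ + 1 + ((j:ℕ) : ZMod L') + 2 = i₀ + 1 + (((j+2:ℕ)) : ZMod L') := by
            push_cast; ring
          rw [e2]; exact c
      -- done LW
    have hs0 : (fun (j : ℕ) => t (i₀ + 1 + (j : ZMod L'))) 0 = true := by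
      show t (i₀ + 1 + ((0:ℕ) : ZMod L')) = true
      have e : i₀ + 1 + ((0:ℕ) : ZMod L') = i₀ + 1 := by push_cast; ring
      rw [e]
      by_contra hc
      exact hhh i₀ ⟨hi₀.1, by simpa using hc⟩
    have hsl : (fun (j : ℕ) => t (i₀ + 1 + (j : ZMod L'))) ((k+1)-1) = true := by
      show t (i₀ + 1 + (((k+1)-1 : ℕ) : ZMod L')) = true
      rw [(by omega : (k+1)-1 = k)]
      by_contra hc
      have e : i₀ + 1 + ((k:ℕ) : ZMod L') + 1 = i₀ + ((k+2 : ℕ) : ZMod L') := by push_cast; ring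
      apply hhh (i₀ + 1 + ((k:ℕ) : ZMod L'))
      rw [e]
      exact ⟨by simpa using hc, him.1⟩
    have hpl : w (i₀ + 1 + ((k+1:ℕ) : ZMod L')) = w (i₀ + ((k+2:ℕ) : ZMod L')) := by
      have e : i₀ + 1 + ((k+1:ℕ) : ZMod L') = i₀ + ((k+2 : ℕ) : ZMod L') := by push_cast; ring
      rw [e]
    have hp0 : w (i₀ + 1 + ((0:ℕ) : ZMod L')) = w (i₀ + 1) := by
      have e : i₀ + 1 + ((0:ℕ) : ZMod L') = i₀ + 1 := by push_cast; ring
      rw [e]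
    have hsides0 := pair_sides i₀ hi₀
    have hsides1 := pair_sides _ him
    have hγle : k + 2 ≤ g - 1 := by omega
    have hℓle : k + 1 ≤ g - 2 := by omega
    -- case analysis on the sides of the two endpoints
    have hu : f (w (i₀ + 1)) = f y ∨ f (w (i₀ + 1)) = f z := by
      rcases hsides0 with ⟨-, h⟩ | ⟨-, h⟩
      · right; exact h
      · left; exact h
    have hu' : f (w (i₀ + ((k+2:ℕ) : ZMod L'))) = f y ∨ f (w (i₀ + ((k+2:ℕ) : ZMod L'))) = f z := by
      rcases hsides1 with ⟨h, -⟩ | ⟨h, -⟩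
      · left; exact h
      · right; exact h
    -- cross case is impossible by the reach hypothesis
    have hcross1 : ¬ (f (w (i₀ + 1)) = f y ∧ f (w (i₀ + ((k+2:ℕ) : ZMod L'))) = f z) := by
      rintro ⟨ha, hb⟩
      have hmem : (fun (j : ℕ) => (w (i₀ + 1 + (j : ZMod L')) : Fin n)) 0 ∈ Fib f (f y) := by
        show w (i₀ + 1 + ((0:ℕ) : ZMod L')) ∈ _
        rw [hp0]; exact mem_Fib.2 ha
      have hend := endpoint_mem_Reach hlw hmem (by omega) (g-2) hℓle
      have hend2 : w (i₀ + 1 + ((k+1:ℕ) : ZMod L')) ∈ Reach f (Fib f (f y)) (g-2) := hend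
      rw [hpl] at hend2
      exact hzR _ hend2 hb
    have hcross2 : ¬ (f (w (i₀ + 1)) = f z ∧ f (w (i₀ + ((k+2:ℕ) : ZMod L'))) = f y) := by
      rintro ⟨ha, hb⟩
      have hrev := hlw.rev
      have hmem : (fun (j : ℕ) => (fun (j' : ℕ) => (w (i₀ + 1 + (j' : ZMod L')) : Fin n)) ((k+1) - j)) 0
          ∈ Fib f (f y) := by
        show w (i₀ + 1 + (((k+1) - 0 : ℕ) : ZMod L')) ∈ _
        have e : (k+1) - 0 = k+1 := rfl
        rw [e]
        have e2 : i₀ + 1 + ((k+1:ℕ) : ZMod L') = i₀ + ((k+2 : ℕ) : ZMod L') := by push_cast; ring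
        rw [e2]
        exact mem_Fib.2 hb
      have hend := endpoint_mem_Reach hrev hmem (by omega) (g-2) hℓle
      have hend2 : w (i₀ + 1 + ((((k+1) - (k+1) : ℕ)) : ZMod L')) ∈ Reach f (Fib f (f y)) (g-2) := hend
      have e3 : (k+1) - (k+1) = 0 := by omega
      rw [e3] at hend2
      have e4 : i₀ + 1 + ((0:ℕ) : ZMod L') = i₀ + 1 := by push_cast; ring
      rw [e4] at hend2
      exact hzR _ hend2 ha
    have hsame : f (w (i₀ + 1)) = f (w (i₀ + ((k+2:ℕ) : ZMod L'))) := by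
      rcases hu with ha | ha <;> rcases hu' with hb | hb
      · rw [ha, hb]
      · exact absurd ⟨ha, hb⟩ hcross1
      · exact absurd ⟨ha, hb⟩ hcross2
      · rw [ha, hb]
    refine ⟨?_, hsame⟩
    by_cases heq : w (i₀ + 1) = w (i₀ + ((k+2:ℕ) : ZMod L'))
    · -- closed : extract a witness of length ≤ k+1
      obtain ⟨m', hm'1, hm'2, w', t', hw'⟩ := extract_closed (k+1) _ _ hlw (by omega) hs0 hsl
        (by show w (i₀ + 1 + ((0:ℕ) : ZMod L')) = w (i₀ + 1 + ((k+1:ℕ) : ZMod L'));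
            rw [hp0, hpl]; exact heq)
      have := hmin m' hm'1 (by omega) w' t' hw'
      omega
    · -- open : extract a witness of length exactly k+2
      obtain ⟨w', t', hw'⟩ := extract_open hlw (by omega) hs0 hsl
        (by show w (i₀ + 1 + ((0:ℕ) : ZMod L')) ≠ w (i₀ + 1 + ((k+1:ℕ) : ZMod L'));
            rw [hp0, hpl]; exact heq)
        (by show f (w (i₀ + 1 + ((0:ℕ) : ZMod L'))) = f (w (i₀ + 1 + ((k+1:ℕ) : ZMod L')));
            rw [hp0, hpl]; exact hsame)
      have := hmin (k+2) (by omega) (by omega) w' t' hw'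
      omega
  -- main argument
  intro i₀ hti₀
  by_contra hcon
  have hsi₀ : spec i₀ := by
    refine ⟨hti₀, ?_⟩
    by_contra hd
    push_neg at hd
    exact hcon ⟨hd.1, hd.2.1, hd.2.2.1, hd.2.2.2⟩
  classical
  have hex1 : ∃ m, 1 ≤ m ∧ m ≤ L' ∧ spec (i₀ + (m : ZMod L')) :=
    ⟨L', by omega, le_rfl, by rw [ZMod.natCast_self, add_zero]; exact hsi₀⟩
  set P1 : ℕ → Prop := fun m => 1 ≤ m ∧ m ≤ L' ∧ spec (i₀ + (m : ZMod L')) with hP1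
  have hm₁spec := Nat.find_spec hex1
  set m₁ := Nat.find hex1 with hm₁def
  obtain ⟨hm₁1, hm₁L, hm₁s⟩ := hm₁spec
  have hm₁min : ∀ r, 1 ≤ r → r < m₁ → ¬ spec (i₀ + (r : ZMod L')) := by
    intro r hr1 hrm hsp
    exact Nat.find_min hex1 hrm ⟨hr1, by omega, hsp⟩
  rcases Nat.lt_or_ge m₁ 2 with hm₁2 | hm₁2
  · -- m₁ = 1 : two consecutive hyperedge steps
    have hm₁e : m₁ = 1 := by omega
    rw [hm₁e] at hm₁s
    have : (1 : ZMod L') = ((1:ℕ) : ZMod L') := by push_cast; ring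
    exact hhh i₀ ⟨hti₀, by rw [this]; exact hm₁s.1⟩
  · obtain ⟨hγm₁, hfeq₁⟩ := key i₀ m₁ hsi₀ hm₁2 hm₁L hm₁s hm₁min
    by_cases hm₁L' : m₁ = L'
    · -- only one special step : its endpoints lie in different fibers, contradiction
      rw [hm₁L', ZMod.natCast_self, add_zero] at hfeq₁
      rcases pair_sides i₀ hsi₀ with ⟨ha, hb⟩ | ⟨ha, hb⟩
      · exact hfyz (ha.symm.trans (hfeq₁.symm.trans hb))
      · exact hfyz ((ha.symm.trans (hfeq₁.symm.trans hb)).symm)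
    · -- a second gap
      have hwit2 : 1 ≤ L' - m₁ ∧ spec ((i₀ + ((m₁:ℕ) : ZMod L')) + (((L' - m₁ : ℕ)) : ZMod L')) := by
        refine ⟨by omega, ?_⟩
        have e : (i₀ + ((m₁:ℕ) : ZMod L')) + (((L' - m₁ : ℕ)) : ZMod L') = i₀ := by
          have e2 : ((m₁:ℕ) : ZMod L') + (((L' - m₁ : ℕ)) : ZMod L') = ((L' : ℕ) : ZMod L') := by
            rw [← Nat.cast_add]
            congr 1
            omega
          rw [add_assoc, e2, ZMod.natCast_self, add_zero]
        rw [e]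
        exact hsi₀
      have hex2 : ∃ m : ℕ, 1 ≤ m ∧ spec ((i₀ + ((m₁:ℕ) : ZMod L')) + ((m : ℕ) : ZMod L')) :=
        ⟨L' - m₁, hwit2⟩
      have hm₂spec := Nat.find_spec hex2
      set m₂ := Nat.find hex2 with hm₂def
      obtain ⟨hm₂1, hm₂s⟩ := hm₂spec
      have hm₂le : m₂ ≤ L' - m₁ := Nat.find_le hwit2
      have hm₂min : ∀ r, 1 ≤ r → r < m₂ → ¬ spec ((i₀ + ((m₁:ℕ) : ZMod L')) + ((r:ℕ) : ZMod L')) := by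
        intro r hr1 hrm hsp
        exact Nat.find_min hex2 hrm ⟨hr1, hsp⟩
      rcases Nat.lt_or_ge m₂ 2 with hm₂2 | hm₂2
      · have hm₂e : m₂ = 1 := by omega
        rw [hm₂e] at hm₂s
        have e3 : (1 : ZMod L') = ((1:ℕ) : ZMod L') := by push_cast; ring
        exact hhh (i₀ + ((m₁:ℕ) : ZMod L')) ⟨hm₁s.1, by rw [e3]; exact hm₂s.1⟩
      · obtain ⟨hγm₂, -⟩ := key (i₀ + ((m₁:ℕ) : ZMod L')) m₂ hm₁s hm₂2 (by omega) hm₂s hm₂min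
        omega

/-! ### swap preserves validity -/

lemma swap_valid (f : Fin n → Fin N) (hv : Valid q f) (y z : Fin n) :
    Valid q (fun v => f (Equiv.swap y z v)) := by
  intro j
  have : Fib (fun v => f (Equiv.swap y z v)) j = (Fib f j).image (Equiv.swap y z) := by
    ext v
    simp only [mem_Fib, mem_image]
    constructor
    · intro hv'
      exact ⟨Equiv.swap y z v, hv', by simp⟩
    · rintro ⟨u, hu, rfl⟩
      simpa using hu
  rw [this, card_image_of_injective _ (Equiv.injective _)]
  exact hv j

/-! ### pure-ham cycles are impossible -/

lemma exists_hyper_step {f : Fin n → Fin N} {L w t} (h : CW f L w t) :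
    ∃ i, t i = false := by
  obtain ⟨hL, hstep, hhh, hut⟩ := h
  by_contra hc
  push_neg at hc
  have hall : ∀ i, t i = true := by
    intro i
    cases hsi : t i with
    | false => exact absurd hsi (hc i)
    | true => rfl
  haveI : NeZero L := ⟨by omega⟩
  obtain ⟨i, -, hi⟩ := Finset.exists_max_image (univ : Finset (ZMod L))
    (fun i => (w i).val) ⟨0, mem_univ 0⟩
  rcases Nat.eq_or_lt_of_le (Nat.one_le_iff_ne_zero.2 (by omega) : 1 ≤ L) with hL1 | hL2
  · -- L = 1 : i + 1 = i, HamAdj (w i) (w i) impossible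
    subst hL1
    have hadj := (hstep i).1 (hall i)
    have he : (i : ZMod 1) + 1 = i := Subsingleton.elim _ _
    rw [he] at hadj
    rcases hadj with hh | hh <;> omega
  · -- L ≥ 2 : max argument
    have h1 : (w (i+1)).val + 1 = (w i).val := by
      have hadj := (hstep i).1 (hall i)
      rcases hadj with hh | hh
      · exfalso; have := hi (i+1) (mem_univ _); omega
      · exact hh
    have h0 : (w (i-1+1)).val = (w i).val := by rw [sub_add_cancel]
    have h2 : (w (i-1)).val + 1 = (w i).val := by
      have hadj := (hstep (i-1)).1 (hall (i-1))
      rw [sub_add_cancel] at hadj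
      rcases hadj with hh | hh
      · exact hh
      · exfalso; have := hi (i-1) (mem_univ _); omega
    have heq : w (i-1+2) = w (i-1) := by
      have e : i - 1 + 2 = i + 1 := by ring
      rw [e]
      exact Fin.ext (by omega)
    exact hut (i-1) ⟨hall _, by rw [sub_add_cancel]; exact hall _, heq⟩


/-! ### the improvement step -/

lemma improve (hq : 3 ≤ q) {g : ℕ} (hg : 3 ≤ g) (hn : n = q^(g+1))
    (f : Fin n → Fin N) (hv : Valid q f)
    (γ₀ : ℕ) (hγ1 : 1 ≤ γ₀) (hγg : γ₀ ≤ g - 1)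
    (hmin : ∀ m, 1 ≤ m → m ≤ g - 1 → ∀ (w : ZMod m → Fin n) t, CW f m w t → γ₀ ≤ m)
    (w₀ : ZMod γ₀ → Fin n) (t₀ : ZMod γ₀ → Bool) (hw₀ : CW f γ₀ w₀ t₀) :
    ∃ f' : Fin n → Fin N, Valid q f' ∧
      (∀ L', 1 ≤ L' → L' ≤ γ₀ → ∀ w t, CW f' L' w t → CW f L' w t) ∧
      ¬ CW f' γ₀ w₀ t₀ := by
  obtain ⟨i₀, hi₀⟩ := exists_hyper_step hw₀
  set y := w₀ (i₀ + 1) with hy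
  obtain ⟨hxy, hfxy⟩ := (hw₀.2.1 i₀).2 hi₀
  have hBad := card_Bad f hv hq (Fib f (f y)) (le_of_eq (hv (f y))) hg hn
  have hzex : ∃ z : Fin n,
      z ∉ (Reach f (Fib f (f y)) (g-2)).biUnion (fun v => Fib f (f v)) := by
    by_contra hc
    push_neg at hc
    have hsub : (univ : Finset (Fin n)) ⊆
        (Reach f (Fib f (f y)) (g-2)).biUnion (fun v => Fib f (f v)) := fun v _ => hc v
    have hca := card_le_card hsub
    rw [card_univ, Fintype.card_fin] at hca
    omega
  obtain ⟨z, hz⟩ := hzex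
  have hzfac : ∀ v ∈ Reach f (Fib f (f y)) (g-2), f v ≠ f z := by
    intro v hvR hc
    exact hz (mem_biUnion.2 ⟨v, hvR, mem_Fib.2 hc.symm⟩)
  have hyR : y ∈ Reach f (Fib f (f y)) (g-2) := Y_subset_Reach f _ _ (mem_Fib.2 rfl)
  have hfyz : f y ≠ f z := hzfac y hyR
  refine ⟨fun v => f (Equiv.swap y z v), swap_valid f hv y z, ?_, ?_⟩
  · intro L' hL1 hLγ w t hw
    have hnn := no_new (g := g) f y z hfyz hzfac γ₀ hγ1 hγg hmin L' hL1 hLγ w t hw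
    obtain ⟨hL0, hstep, hhh, hut⟩ := hw
    refine ⟨hL0, ?_, hhh, hut⟩
    intro i
    refine ⟨(hstep i).1, ?_⟩
    intro hti
    obtain ⟨n1, n2, n3, n4⟩ := hnn i hti
    obtain ⟨hne, hfe⟩ := (hstep i).2 hti
    have hfe' : f (Equiv.swap y z (w i)) = f (Equiv.swap y z (w (i+1))) := hfe
    rw [Equiv.swap_apply_of_ne_of_ne n1 n2, Equiv.swap_apply_of_ne_of_ne n3 n4] at hfe'
    exact ⟨hne, hfe'⟩
  · intro hw'
    obtain ⟨hx'y, hfe⟩ := (hw'.2.1 i₀).2 hi₀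
    have hfe' : f (Equiv.swap y z (w₀ i₀)) = f (Equiv.swap y z (w₀ (i₀+1))) := hfe
    have hxz : w₀ i₀ ≠ z := by
      intro hc
      apply hfyz
      rw [← hfxy, hc]
    rw [Equiv.swap_apply_of_ne_of_ne hxy hxz] at hfe'
    have hyy : Equiv.swap y z (w₀ (i₀+1)) = z := Equiv.swap_apply_left y z
    rw [hyy] at hfe'
    exact hfyz (hfxy.symm.trans hfe')


/-! ### the potential function -/

open Classical in
noncomputable def cnt (f : Fin n → Fin N) (j : ℕ) : ℕ :=
  (univ.filter (fun wt : (ZMod (j+1) → Fin n) × (ZMod (j+1) → Bool) =>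
    CW f (j+1) wt.1 wt.2)).card

noncomputable def CB (n : ℕ) (j : ℕ) : ℕ :=
  Fintype.card ((ZMod (j+1) → Fin n) × (ZMod (j+1) → Bool))

noncomputable def BB (n g : ℕ) : ℕ := 1 + ∑ j ∈ Finset.range (g-1), CB n j

noncomputable def muF (g : ℕ) (f : Fin n → Fin N) : ℕ :=
  ∑ j ∈ Finset.range (g-1), cnt f j * (BB n g)^(g-1-j)

lemma cnt_le_CB (f : Fin n → Fin N) (j : ℕ) : cnt f j ≤ CB n j := by
  classical
  refine le_trans (card_filter_le _ _) ?_
  rw [card_univ]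
  exact le_of_eq (by congr 1)

lemma mu_lt {g : ℕ} (f f' : Fin n → Fin N) (j₀ : ℕ) (hj₀ : j₀ < g - 1)
    (hzero : ∀ j, j < j₀ → cnt f' j = 0)
    (hlt : cnt f' j₀ < cnt f j₀) :
    muF g f' < muF g f := by
  set B := BB n g with hB
  have hB1 : 1 ≤ B := by
    rw [hB, BB]; omega
  set X := B^(g-2-j₀) with hX
  have hXpos : 0 < X := by
    rw [hX]; exact Nat.pow_pos (by omega)
  have hBX : B^(g-1-j₀) = B * X := by
    rw [hX, ← pow_succ']
    congr 1
    omega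
  have hsplit : ∀ (c : ℕ → ℕ), ∑ j ∈ Finset.range (g-1), c j
      = (∑ j ∈ Finset.range j₀, c j) + c j₀ + (∑ j ∈ Finset.Ico (j₀+1) (g-1), c j) := by
    intro c
    have h1 : (∑ j ∈ Finset.Ico 0 (j₀+1), c j) + ∑ j ∈ Finset.Ico (j₀+1) (g-1), c j
        = ∑ j ∈ Finset.Ico 0 (g-1), c j :=
      Finset.sum_Ico_consecutive c (by omega) (by omega)
    rw [← Finset.range_eq_Ico, ← Finset.range_eq_Ico] at h1
    rw [← h1, Finset.sum_range_succ]
  have hf'eq : muF g f' = (∑ j ∈ Finset.range j₀, cnt f' j * B^(g-1-j))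
      + cnt f' j₀ * B^(g-1-j₀) + (∑ j ∈ Finset.Ico (j₀+1) (g-1), cnt f' j * B^(g-1-j)) := by
    rw [muF, ← hB]
    exact hsplit _
  have hz : (∑ j ∈ Finset.range j₀, cnt f' j * B^(g-1-j)) = 0 := by
    apply Finset.sum_eq_zero
    intro j hj
    rw [Finset.mem_range] at hj
    rw [hzero j hj, Nat.zero_mul]
  have htail : (∑ j ∈ Finset.Ico (j₀+1) (g-1), cnt f' j * B^(g-1-j)) ≤ (B - 1) * X := by
    have h1 : ∀ j ∈ Finset.Ico (j₀+1) (g-1), cnt f' j * B^(g-1-j) ≤ CB n j * X := by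
      intro j hj
      rw [Finset.mem_Ico] at hj
      apply Nat.mul_le_mul (cnt_le_CB f' j)
      rw [hX]
      exact Nat.pow_le_pow_right (by omega) (by omega)
    refine le_trans (Finset.sum_le_sum h1) ?_
    rw [← Finset.sum_mul]
    apply Nat.mul_le_mul_right
    have h2 : (∑ j ∈ Finset.Ico (j₀+1) (g-1), CB n j) ≤ ∑ j ∈ Finset.range (g-1), CB n j := by
      apply Finset.sum_le_sum_of_subset
      rw [Finset.range_eq_Ico]
      apply Finset.Ico_subset_Ico <;> omega
    have h3 : (∑ j ∈ Finset.range (g-1), CB n j) = B - 1 := by rw [hB, BB]; omega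
    omega
  have hlow : cnt f j₀ * B^(g-1-j₀) ≤ muF g f := by
    rw [muF, ← hB]
    exact Finset.single_le_sum (f := fun j => cnt f j * B^(g-1-j))
      (fun i _ => Nat.zero_le _) (Finset.mem_range.2 hj₀)
  have ha1 : 1 ≤ cnt f j₀ := by omega
  calc muF g f' = 0 + cnt f' j₀ * B^(g-1-j₀)
        + (∑ j ∈ Finset.Ico (j₀+1) (g-1), cnt f' j * B^(g-1-j)) := by rw [hf'eq, hz]
    _ ≤ (cnt f j₀ - 1) * (B * X) + (B - 1) * X := by
        rw [Nat.zero_add, hBX]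
        have : cnt f' j₀ ≤ cnt f j₀ - 1 := by omega
        exact Nat.add_le_add (Nat.mul_le_mul_right _ this) htail
    _ < cnt f j₀ * (B * X) := by
        have e1 : (B - 1) * X = B * X - X := by rw [Nat.sub_mul, Nat.one_mul]
        have hA : cnt f j₀ - 1 + 1 = cnt f j₀ := by omega
        have e2 : cnt f j₀ * (B * X) = (cnt f j₀ - 1) * (B * X) + (B * X) := by
          conv_lhs => rw [← hA]
          rw [Nat.add_mul, Nat.one_mul]
        have e3 : X ≤ B * X := Nat.le_mul_of_pos_left _ (by omega)
        omega
    _ ≤ muF g f := by rw [← hBX]; exact hlow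


lemma cnt_eq_zero (f' : Fin n → Fin N) (j : ℕ)
    (h : ∀ (w : ZMod (j+1) → Fin n) (t : ZMod (j+1) → Bool), ¬ CW f' (j+1) w t) :
    cnt f' j = 0 := by
  classical
  unfold cnt
  rw [Finset.card_eq_zero, Finset.eq_empty_iff_forall_notMem]
  rintro ⟨w', t'⟩ hmem
  rw [Finset.mem_filter] at hmem
  exact h w' t' hmem.2

lemma cnt_lt (f f' : Fin n → Fin N) (j : ℕ)
    (hsub : ∀ (w : ZMod (j+1) → Fin n) (t : ZMod (j+1) → Bool), CW f' (j+1) w t → CW f (j+1) w t)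
    (w₀ : ZMod (j+1) → Fin n) (t₀ : ZMod (j+1) → Bool)
    (hw₀ : CW f (j+1) w₀ t₀) (hnot : ¬ CW f' (j+1) w₀ t₀) :
    cnt f' j < cnt f j := by
  classical
  unfold cnt
  apply Finset.card_lt_card
  rw [Finset.ssubset_iff_of_subset]
  · refine ⟨(w₀, t₀), ?_, ?_⟩
    · rw [Finset.mem_filter]; exact ⟨Finset.mem_univ _, hw₀⟩
    · rw [Finset.mem_filter]; rintro ⟨-, hcw⟩; exact hnot hcw
  · intro wt hm
    rw [Finset.mem_filter] at hm ⊢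
    exact ⟨Finset.mem_univ _, hsub wt.1 wt.2 hm.2⟩

end S12

/-- High-girth interleaver existence (Theorem 2): for q ≥ 3, g ≥ 3 and
n = q^{g+1} (so n ≥ q⁴), there is a set of n/q = q^g hyperedges, each of q
vertices, partitioning the vertices of the Hamiltonian line on n vertices, such
that every cycle of the resulting hypergraph has length at least g. -/
theorem stmt12 (q g : ℕ) (hq : 3 ≤ q) (hg : 3 ≤ g) :
    ∃ A : Finset (Finset (Fin (q ^ (g + 1)))),
      (∀ e ∈ A, e.card = q)
      ∧ (∀ v : Fin (q ^ (g + 1)), ∃! e, e ∈ A ∧ v ∈ e)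
      ∧ A.card = q ^ g
      ∧ (∀ (L : ℕ) (w : ZMod L → Fin (q ^ (g + 1))) (t : ZMod L → Bool),
          IsCycleWalk A L w t → g ≤ L) := by
  classical
  have hN0 : 0 < q ^ g := Nat.pow_pos (by omega)
  have hn : q ^ (g+1) = q * q ^ g := by rw [pow_succ, Nat.mul_comm]
  obtain ⟨fs, -, hfsmin⟩ := Finset.exists_min_image
    (Finset.univ : Finset {f : Fin (q ^ (g+1)) → Fin (q ^ g) // S12.Valid q f})
    (fun fv => S12.muF g fv.val)
    ⟨⟨S12.res hN0, S12.res_valid hn hN0⟩, Finset.mem_univ _⟩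
  -- the minimiser admits no short cycle walk
  have hshort : ∀ m, 1 ≤ m → m ≤ g - 1 →
      ∀ (w : ZMod m → Fin (q ^ (g+1))) (t : ZMod m → Bool), ¬ S12.CW fs.val m w t := by
    by_contra hc
    push_neg at hc
    obtain ⟨m, hm1, hm2, w, t, hw⟩ := hc
    have hex : ∃ m, 1 ≤ m ∧ m ≤ g - 1 ∧
        ∃ (w : ZMod m → Fin (q ^ (g+1))) (t : ZMod m → Bool), S12.CW fs.val m w t :=
      ⟨m, hm1, hm2, w, t, hw⟩
    have hspec := Nat.find_spec hex
    have hminfact : ∀ m', m' < Nat.find hex →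
        ¬ (1 ≤ m' ∧ m' ≤ g - 1 ∧ ∃ (w : ZMod m' → Fin (q ^ (g+1)))
          (t : ZMod m' → Bool), S12.CW fs.val m' w t) :=
      fun m' h => Nat.find_min hex h
    generalize hG : Nat.find hex = γ₀ at hspec hminfact
    obtain ⟨hγ1, hγg, w₀, t₀, hw₀⟩ := hspec
    obtain ⟨j₀, rfl⟩ : ∃ j₀, γ₀ = j₀ + 1 := ⟨γ₀ - 1, by omega⟩
    have hmin : ∀ m', 1 ≤ m' → m' ≤ g - 1 →
        ∀ (w' : ZMod m' → Fin (q ^ (g+1))) (t' : ZMod m' → Bool),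
        S12.CW fs.val m' w' t' → j₀ + 1 ≤ m' := by
      intro m' h1 h2 w' t' hw'
      by_contra hlt
      exact hminfact m' (by omega) ⟨h1, h2, w', t', hw'⟩
    obtain ⟨f', hvalid', hfactA, hfactB⟩ :=
      S12.improve hq hg rfl fs.val fs.property (j₀+1) hγ1 hγg hmin w₀ t₀ hw₀
    have hzero : ∀ j, j < j₀ → S12.cnt f' j = 0 := by
      intro j hj
      apply S12.cnt_eq_zero
      intro w' t' hcw
      have hcwf := hfactA (j+1) (by omega) (by omega) w' t' hcw
      have := hmin (j+1) (by omega) (by omega) w' t' hcwf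
      omega
    have hlt : S12.cnt f' j₀ < S12.cnt fs.val j₀ :=
      S12.cnt_lt fs.val f' j₀
        (fun w' t' hcw => hfactA (j₀+1) (by omega) le_rfl w' t' hcw)
        w₀ t₀ hw₀ hfactB
    have hμ := S12.mu_lt (g := g) fs.val f' j₀ (by omega) hzero hlt
    have hge := hfsmin ⟨f', hvalid'⟩ (Finset.mem_univ _)
    simp only at hge
    omega
  -- assemble the answer
  refine ⟨S12.AOf fs.val, ?_, ?_, ?_, ?_⟩
  · intro e he
    rw [S12.AOf, Finset.mem_image] at he
    obtain ⟨j, -, rfl⟩ := he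
    exact fs.property j
  · intro v
    refine ⟨S12.Fib fs.val (fs.val v),
      ⟨Finset.mem_image_of_mem _ (Finset.mem_univ _), S12.mem_Fib.2 rfl⟩, ?_⟩
    rintro e ⟨he, hv⟩
    rw [S12.AOf, Finset.mem_image] at he
    obtain ⟨j, -, rfl⟩ := he
    rw [S12.mem_Fib] at hv
    rw [hv]
  · rw [S12.AOf, Finset.card_image_of_injOn, Finset.card_univ, Fintype.card_fin]
    intro a _ b _ hab
    have hpos : 0 < (S12.Fib fs.val a).card := by rw [fs.property a]; omega
    obtain ⟨v, hv⟩ := Finset.card_pos.1 hpos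
    have hv' : v ∈ S12.Fib fs.val b := by rw [← hab]; exact hv
    rw [S12.mem_Fib] at hv hv'
    rw [← hv, hv']
  · intro L w t hcyc
    rw [S12.CW_iff] at hcyc
    by_contra hL
    push_neg at hL
    exact hshort L (by have := hcyc.1; omega) (by omega) w t hcyc
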